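/- arXiv:2603.09153 — 2 statements merged into one kernel-verified Lean document; each statement's English description precedes it below -/
import Mathlib

section
/- Let G be a digraph and p ≥ 0. Every ∂-invariant cluster in Ω_p(G) is a finite sum of minimal ∂-invariant clusters. -/
open scoped BigOperators
open Classical

/-- A digraph: an irreflexive relation on a vertex type. -/
structure Dgraph (V : Type*) where
  Adj : V → V → Prop
  loopless : ∀ v : V, ¬ Adj v v

/-- An elementary `p`-path on the vertex type `V`: a sequence of `p+1` vertices. -/
abbrev EPath (V : Type*) (p : ℕ) := Fin (p + 1) → V

/-- A path is regular if consecutive vertices are distinct. -/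
def IsRegularPath {V : Type*} {p : ℕ} (f : EPath V p) : Prop :=
  ∀ k : Fin p, f k.castSucc ≠ f k.succ

/-- A path is allowed if consecutive vertices are joined by an arrow. -/
def IsAllowedPath {V : Type*} (G : Dgraph V) {p : ℕ} (f : EPath V p) : Prop :=
  ∀ k : Fin p, G.Adj (f k.castSucc) (f k.succ)

/-- The projection of `Λ_p` onto its regular part; this realizes `R_p = Λ_p / I_p`
as the subspace of `Λ_p` spanned by the regular elementary paths. -/
noncomputable def regProj (K : Type*) [Field K] (V : Type*) (p : ℕ) :
    (EPath V p →₀ K) →ₗ[K] (EPath V p →₀ K) :=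
  Finsupp.linearCombination K
    (fun f : EPath V p => if IsRegularPath f then Finsupp.single f (1 : K) else 0)

/-- The (non-reduced) boundary operator on `Λ`. -/
noncomputable def bdryFull (K : Type*) [Field K] (V : Type*) (p : ℕ) :
    (EPath V (p + 1) →₀ K) →ₗ[K] (EPath V p →₀ K) :=
  Finsupp.linearCombination K
    (fun f : EPath V (p + 1) =>
      ∑ q : Fin (p + 2), ((-1 : K) ^ (q : ℕ)) • Finsupp.single (f ∘ q.succAbove) (1 : K))

/-- The boundary operator `∂` on the regular part (i.e. on `R`). -/
noncomputable def bdry (K : Type*) [Field K] (V : Type*) (p : ℕ) :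
    (EPath V (p + 1) →₀ K) →ₗ[K] (EPath V p →₀ K) :=
  (regProj K V p).comp (bdryFull K V p)

/-- The span of the regular elementary paths: the realization of `R_p` inside `Λ_p`. -/
noncomputable def regularMod (K : Type*) [Field K] (V : Type*) (p : ℕ) :
    Submodule K (EPath V p →₀ K) :=
  Submodule.span K {x | ∃ f : EPath V p, IsRegularPath f ∧ x = Finsupp.single f (1 : K)}

/-- `A_p(G)`: the span of the allowed elementary paths. -/
noncomputable def allowedMod (K : Type*) [Field K] (V : Type*) (G : Dgraph V) (p : ℕ) :
    Submodule K (EPath V p →₀ K) :=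
  Submodule.span K {x | ∃ f : EPath V p, IsAllowedPath G f ∧ x = Finsupp.single f (1 : K)}

/-- `Ω_p(G)`: the space of ∂-invariant `p`-paths. -/
noncomputable def Omega (K : Type*) [Field K] (V : Type*) (G : Dgraph V) :
    (p : ℕ) → Submodule K (EPath V p →₀ K)
  | 0 => allowedMod K V G 0
  | (p + 1) => allowedMod K V G (p + 1) ⊓ (allowedMod K V G p).comap (bdry K V p)

/-- An `(a,b)`-cluster: every elementary path occurring with nonzero coefficient
starts at `a` and ends at `b`. -/
def IsCluster {K : Type*} [Field K] {V : Type*} {p : ℕ} (a b : V) (ω : EPath V p →₀ K) : Prop :=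
  ∀ f ∈ ω.support, f 0 = a ∧ f (Fin.last p) = b

/-- A minimal ∂-invariant path: a nonzero element of `Ω_p` such that no nonzero
∂-invariant path is supported on a proper (nonempty) subset of its support. -/
def IsMinimal (K : Type*) [Field K] {V : Type*} (G : Dgraph V) (p : ℕ)
    (ω : EPath V p →₀ K) : Prop :=
  ω ∈ Omega K V G p ∧ ω ≠ 0 ∧
    ∀ ω' : EPath V p →₀ K, ω' ∈ Omega K V G p → ω' ≠ 0 → ¬ (ω'.support ⊂ ω.support)

/-- A digraph map: every arrow goes to an arrow or collapses to a vertex. -/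
structure DgraphMap {V W : Type*} (X : Dgraph V) (Y : Dgraph W) where
  toFun : V → W
  map_adj : ∀ ⦃u v : V⦄, X.Adj u v → Y.Adj (toFun u) (toFun v) ∨ toFun u = toFun v

/-- The induced map `f_* : R_n(X) → R_n(Y)` (in the regular-part realization):
push forward elementary paths and kill the irregular ones. -/
noncomputable def inducedMap (K : Type*) [Field K] {V W : Type*} (φ : V → W) (p : ℕ) :
    (EPath V p →₀ K) →ₗ[K] (EPath W p →₀ K) :=
  (regProj K W p).comp (Finsupp.lmapDomain K K (fun f : EPath V p => φ ∘ f))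

/-- Cyclic successor on `Fin m`. -/
def finRot {m : ℕ} (k : Fin m) : Fin m := ⟨((k : ℕ) + 1) % m, Nat.mod_lt _ k.pos⟩

/-- The vertices of the trapezohedron `T_m`. -/
inductive TVert (m : ℕ) : Type
  | a : TVert m
  | b : TVert m
  | vi : Fin m → TVert m
  | vj : Fin m → TVert m

/-- The adjacency relation of the trapezohedron `T_m`:
`a → i_k`, `i_k → j_k`, `i_{k+1} → j_k`, `j_k → b` (indices mod `m`). -/
def TrapAdj (m : ℕ) : TVert m → TVert m → Prop
  | TVert.a, TVert.vi _ => True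
  | TVert.vi k, TVert.vj l => k = l ∨ k = finRot l
  | TVert.vj _, TVert.b => True
  | _, _ => False

/-- The trapezohedron digraph `T_m`. -/
def Trap (m : ℕ) : Dgraph (TVert m) where
  Adj := TrapAdj m
  loopless := by intro v h; cases v <;> exact h

/-- The trapezohedral path `τ_m`. -/
noncomputable def tau (K : Type*) [Field K] (m : ℕ) : EPath (TVert m) 3 →₀ K :=
  ∑ k : Fin m,
    (Finsupp.single ![TVert.a, TVert.vi k, TVert.vj k, TVert.b] (1 : K)
      - Finsupp.single ![TVert.a, TVert.vi (finRot k), TVert.vj k, TVert.b] (1 : K))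

/-- The submodule of `(a,b)`-clusters. -/
def clusterMod (K : Type*) [Field K] (V : Type*) (p : ℕ) (a b : V) :
    Submodule K (EPath V p →₀ K) where
  carrier := {ω | ∀ f ∈ ω.support, f 0 = a ∧ f (Fin.last p) = b}
  add_mem' := by
    intro x y hx hy f hf
    rcases Finset.mem_union.mp (Finsupp.support_add hf) with h | h
    exacts [hx f h, hy f h]
  zero_mem' := by intro f hf; simp at hf
  smul_mem' := by
    intro c x hx f hf
    exact hx f (Finsupp.support_smul hf)

/-- `Ω₃^{(a,b)}(G)`: the ∂-invariant `(a,b)`-clusters. -/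
noncomputable def OmegaAB (K : Type*) [Field K] (V : Type*) (G : Dgraph V) (a b : V) :
    Submodule K (EPath V 3 →₀ K) :=
  Omega K V G 3 ⊓ clusterMod K V 3 a b

/-- Out-neighbourhood. -/
def Nplus {V : Type*} (G : Dgraph V) (v : V) : Set V := {w | G.Adj v w}

/-- In-neighbourhood. -/
def Nminus {V : Type*} (G : Dgraph V) (v : V) : Set V := {w | G.Adj w v}

/-- `E(X,Y)`: the edges of `G` starting in `X` and ending in `Y`. -/
def Ebetween {V : Type*} (G : Dgraph V) (X Y : Set V) : Set (V × V) :=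
  {p | p.1 ∈ X ∧ p.2 ∈ Y ∧ G.Adj p.1 p.2}

/-- `A = N⁺(a) \ {b}`. -/
def setA {V : Type*} (G : Dgraph V) (a b : V) : Set V := Nplus G a \ {b}

/-- `B = N⁻(b) \ {a}`. -/
def setB {V : Type*} (G : Dgraph V) (a b : V) : Set V := Nminus G b \ {a}

/-- The vertex set of `H = Ind(A \ B, B \ A)`. -/
def Hverts {V : Type*} (G : Dgraph V) (a b : V) : Set V :=
  (setA G a b \ setB G a b) ∪ (setB G a b \ setA G a b)

/-- `H = Ind(A \ B, B \ A)` regarded as an undirected (simple) graph on its vertex set. -/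
def Hgraph {V : Type*} (G : Dgraph V) (a b : V) : SimpleGraph (Hverts G a b) where
  Adj u v :=
    ((u : V) ∈ setA G a b \ setB G a b ∧ (v : V) ∈ setB G a b \ setA G a b ∧ G.Adj u v)
      ∨ ((v : V) ∈ setA G a b \ setB G a b ∧ (u : V) ∈ setB G a b \ setA G a b ∧ G.Adj v u)
  symm := by constructor; intro u v h; exact h.symm
  loopless := by
    constructor
    intro u h
    rcases h with ⟨_, _, h3⟩ | ⟨_, _, h3⟩ <;> exact G.loopless _ h3

/-- The set of vertices of `G` belonging to the connected component `c` of `H`. -/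
def compVerts {V : Type*} (G : Dgraph V) (a b : V)
    (c : (Hgraph G a b).ConnectedComponent) : Set V :=
  {v | ∃ h : v ∈ Hverts G a b, (Hgraph G a b).connectedComponentMk ⟨v, h⟩ = c}

/-- The set `S_k` associated to a connected component of `H`. -/
def Sset {V : Type*} (G : Dgraph V) (a b : V)
    (c : (Hgraph G a b).ConnectedComponent) : Set (V × V) :=
  Ebetween G (compVerts G a b c ∩ (setA G a b \ setB G a b))
      ((Nplus G a ∪ {a}) ∩ Nminus G b)
    ∪ Ebetween G (Nplus G a ∩ (Nminus G b ∪ {b}))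
      (compVerts G a b c ∩ (setB G a b \ setA G a b))

lemma cluster_of_subset {K : Type*} [Field K] {V : Type*} {p : ℕ} {a b : V}
    {ω ω' : EPath V p →₀ K} (h : ω'.support ⊆ ω.support) (hcl : IsCluster a b ω) :
    IsCluster a b ω' := fun f hf => hcl f (h hf)

lemma decomp_aux (K : Type*) [Field K] {V : Type*} (G : Dgraph V) (p : ℕ) (a b : V) :
    ∀ n : ℕ, ∀ ω : EPath V p →₀ K, ω.support.card ≤ n → ω ∈ Omega K V G p →
      IsCluster a b ω →
      ∃ L : List (EPath V p →₀ K),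
        (∀ x ∈ L, IsMinimal K G p x ∧ IsCluster a b x) ∧ ω = L.sum := by
  intro n
  induction n with
  | zero =>
    intro ω h _ _
    refine ⟨[], by simp, ?_⟩
    have : ω.support.card = 0 := Nat.le_zero.mp h
    simpa using Finsupp.card_support_eq_zero.mp this
  | succ n ih =>
    intro ω hcard hΩ hcl
    by_cases h0 : ω = 0
    · exact ⟨[], by simp, by simp [h0]⟩
    by_cases hmin : IsMinimal K G p ω
    · exact ⟨[ω], by simp [hmin, hcl], by simp⟩
    · have hex : ∃ ω' : EPath V p →₀ K, ω' ∈ Omega K V G p ∧ ω' ≠ 0 ∧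
          ω'.support ⊂ ω.support := by
        simp only [IsMinimal, not_and, not_forall, not_not] at hmin
        obtain ⟨ω', h1, h2, h3⟩ := hmin hΩ h0
        exact ⟨ω', h1, h2, h3⟩
      obtain ⟨ω', hΩ', h0', hss⟩ := hex
      obtain ⟨f, hf⟩ := Finsupp.support_nonempty_iff.mpr h0'
      have hωf : ω' f ≠ 0 := Finsupp.mem_support_iff.mp hf
      set c : K := ω f / ω' f with hc
      set ω₂ : EPath V p →₀ K := ω - c • ω' with hω₂
      have hsub' : (c • ω').support ⊆ ω.support :=
        (Finsupp.support_smul).trans hss.subset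
      have hsub2 : ω₂.support ⊆ ω.support.erase f := by
        intro g hg
        have hg2 : g ∈ ω.support ∪ (c • ω').support := Finsupp.support_sub hg
        have hgω : g ∈ ω.support := by
          rcases Finset.mem_union.mp hg2 with h | h
          · exact h
          · exact hsub' h
        refine Finset.mem_erase.mpr ⟨?_, hgω⟩
        intro hgf
        subst hgf
        have : ω₂ g = 0 := by
          simp only [hω₂, Finsupp.sub_apply, Finsupp.smul_apply, smul_eq_mul, hc]
          field_simp
          simp
        exact Finsupp.mem_support_iff.mp hg this
      have hcard2 : ω₂.support.card ≤ n := by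
        have h1 := Finset.card_le_card hsub2
        have h2 : (ω.support.erase f).card = ω.support.card - 1 :=
          Finset.card_erase_of_mem (hss.subset hf)
        omega
      have hcard3 : (c • ω').support.card ≤ n := by
        have h1 := Finset.card_le_card (Finsupp.support_smul (b := c) (g := ω'))
        have h2 := Finset.card_lt_card hss
        omega
      have hΩ₂ : ω₂ ∈ Omega K V G p :=
        Submodule.sub_mem _ hΩ (Submodule.smul_mem _ c hΩ')
      have hΩ₃ : c • ω' ∈ Omega K V G p := Submodule.smul_mem _ c hΩ'
      have hcl2 : IsCluster a b ω₂ :=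
        cluster_of_subset (hsub2.trans (Finset.erase_subset _ _)) hcl
      have hcl3 : IsCluster a b (c • ω') := cluster_of_subset hsub' hcl
      obtain ⟨L₁, hL₁, e₁⟩ := ih ω₂ hcard2 hΩ₂ hcl2
      obtain ⟨L₂, hL₂, e₂⟩ := ih (c • ω') hcard3 hΩ₃ hcl3
      refine ⟨L₁ ++ L₂, ?_, ?_⟩
      · intro x hx
        rcases List.mem_append.mp hx with h | h
        exacts [hL₁ x h, hL₂ x h]
      · rw [List.sum_append, ← e₁, ← e₂, hω₂]
        abel

theorem statement2 (K : Type*) [Field K] {V : Type*} (G : Dgraph V) (p : ℕ) (a b : V)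
    (ω : EPath V p →₀ K) (hω : ω ∈ Omega K V G p) (hcl : IsCluster a b ω) :
    ∃ (n : ℕ) (g : Fin n → (EPath V p →₀ K)),
      (∀ i : Fin n, IsMinimal K G p (g i) ∧ ∃ a' b' : V, IsCluster a' b' (g i)) ∧
      ω = ∑ i : Fin n, g i := by
  obtain ⟨L, hL, e⟩ := decomp_aux K G p a b ω.support.card ω le_rfl hω hcl
  refine ⟨L.length, L.get, ?_, ?_⟩
  · intro i
    obtain ⟨h1, h2⟩ := hL (L.get i) (L.get_mem i)
    exact ⟨h1, a, b, h2⟩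
  · rw [e, ← Fin.sum_ofFn, List.ofFn_get]
end

section
/- Let G be a digraph, m ≥ 2 an integer, and let a, i₀,…,i_{m−1}, j₀,…,j_{m−1}, b be vertices (not necessarily pairwise distinct) satisfying a → i_k, i_k → j_k, j_k → b, and i_{k+1} → j_k for all k = 0,…,m−1 with indices mod m. Then ω := Σ_{k=0}^{m−1} (e_{a i_k j_k b} − e_{a i_{k+1} j_k b}) belongs to Ω₃(G); moreover there exists a digraph map f : T_m → G with f_*(τ_m) = ω. -/
open scoped BigOperators
open Classical

section Aux

variable {K : Type*} [Field K] {V : Type*}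

lemma allowed_regular (G : Dgraph V) {p : ℕ} {f : EPath V p} (h : IsAllowedPath G f) :
    IsRegularPath f := fun k hk => G.loopless _ (hk ▸ h k)

lemma regProj_single (p : ℕ) (f : EPath V p) :
    regProj K V p (Finsupp.single f 1)
      = if IsRegularPath f then Finsupp.single f 1 else 0 := by
  simp [regProj, Finsupp.linearCombination_single]

lemma regProj_single_reg {p : ℕ} {f : EPath V p} (h : IsRegularPath f) :
    regProj K V p (Finsupp.single f 1) = Finsupp.single f 1 := by
  rw [regProj_single, if_pos h]

lemma comp_succAbove0 (x0 x1 x2 x3 : V) :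
    (![x0,x1,x2,x3] : Fin 4 → V) ∘ (0 : Fin 4).succAbove = ![x1,x2,x3] := by
  funext k; fin_cases k <;> rfl

lemma comp_succAbove1 (x0 x1 x2 x3 : V) :
    (![x0,x1,x2,x3] : Fin 4 → V) ∘ (1 : Fin 4).succAbove = ![x0,x2,x3] := by
  funext k; fin_cases k <;> rfl

lemma comp_succAbove2 (x0 x1 x2 x3 : V) :
    (![x0,x1,x2,x3] : Fin 4 → V) ∘ (2 : Fin 4).succAbove = ![x0,x1,x3] := by
  funext k; fin_cases k <;> rfl

lemma comp_succAbove3 (x0 x1 x2 x3 : V) :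
    (![x0,x1,x2,x3] : Fin 4 → V) ∘ (3 : Fin 4).succAbove = ![x0,x1,x2] := by
  funext k; fin_cases k <;> rfl

lemma bdryFull_single3 (x0 x1 x2 x3 : V) :
    bdryFull K V 2 (Finsupp.single (![x0,x1,x2,x3] : EPath V 3) 1) =
      Finsupp.single (![x1,x2,x3] : EPath V 2) 1 - Finsupp.single ![x0,x2,x3] 1 +
      Finsupp.single ![x0,x1,x3] 1 - Finsupp.single ![x0,x1,x2] 1 := by
  rw [bdryFull, Finsupp.linearCombination_single, one_smul, Fin.sum_univ_four,
    comp_succAbove0, comp_succAbove1, comp_succAbove2, comp_succAbove3]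
  have e2 : ((2 : Fin 4) : ℕ) = 2 := rfl
  have e3 : ((3 : Fin 4) : ℕ) = 3 := rfl
  norm_num [e2, e3]
  abel

lemma allowed3 (G : Dgraph V) {x0 x1 x2 x3 : V} (h1 : G.Adj x0 x1) (h2 : G.Adj x1 x2)
    (h3 : G.Adj x2 x3) : IsAllowedPath G (![x0,x1,x2,x3] : EPath V 3) := by
  intro k; fin_cases k
  · exact h1
  · exact h2
  · exact h3

lemma allowed2 (G : Dgraph V) {x0 x1 x2 : V} (h1 : G.Adj x0 x1) (h2 : G.Adj x1 x2) :
    IsAllowedPath G (![x0,x1,x2] : EPath V 2) := by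
  intro k; fin_cases k
  · exact h1
  · exact h2

lemma single_allowed_mem (G : Dgraph V) {p : ℕ} {f : EPath V p} (h : IsAllowedPath G f) :
    Finsupp.single f (1 : K) ∈ allowedMod K V G p :=
  Submodule.subset_span ⟨f, h, rfl⟩

lemma bdry_single3 (G : Dgraph V) {x0 x1 x2 x3 : V} (h1 : G.Adj x0 x1) (h2 : G.Adj x1 x2)
    (h3 : G.Adj x2 x3) :
    bdry K V 2 (Finsupp.single (![x0,x1,x2,x3] : EPath V 3) 1) =
      Finsupp.single (![x1,x2,x3] : EPath V 2) 1
      - regProj K V 2 (Finsupp.single ![x0,x2,x3] 1)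
      + regProj K V 2 (Finsupp.single ![x0,x1,x3] 1)
      - Finsupp.single ![x0,x1,x2] 1 := by
  rw [bdry, LinearMap.comp_apply, bdryFull_single3, map_sub, map_add, map_sub,
    regProj_single_reg (allowed_regular G (allowed2 G h2 h3)),
    regProj_single_reg (allowed_regular G (allowed2 G h1 h2))]

lemma finRot_inj {m : ℕ} : Function.Injective (finRot (m := m)) := by
  intro k l h
  have e : ∀ j : Fin m, ((j:ℕ)+1) % m = if (j:ℕ)+1 = m then 0 else (j:ℕ)+1 := by
    intro j
    rcases eq_or_lt_of_le (Nat.succ_le_of_lt j.isLt) with h'|h'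
    · have h2 : (↑j + 1) = m := h'
      rw [if_pos h2, h2, Nat.mod_self]
    · rw [Nat.mod_eq_of_lt h', if_neg (by omega)]
  have h2 : ((k:ℕ)+1) % m = ((l:ℕ)+1) % m := congrArg Fin.val h
  rw [e k, e l] at h2
  have hk := k.isLt; have hl := l.isLt
  ext; split_ifs at h2 <;> omega

lemma finRot_bij {m : ℕ} : Function.Bijective (finRot (m := m)) :=
  Finite.injective_iff_bijective.mp finRot_inj

end Aux

lemma inducedMap_single {K : Type*} [Field K] {V W : Type*} (φ : V → W) {p : ℕ}
    (f : EPath V p) :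
    inducedMap K φ p (Finsupp.single f 1) = regProj K W p (Finsupp.single (φ ∘ f) 1) := by
  rw [inducedMap, LinearMap.comp_apply, Finsupp.lmapDomain_apply, Finsupp.mapDomain_single]

def trapMap {V : Type*} {m : ℕ} (a b : V) (iv jv : Fin m → V) : TVert m → V
  | TVert.a => a
  | TVert.b => b
  | TVert.vi k => iv k
  | TVert.vj k => jv k

lemma trapMap_comp {V : Type*} {m : ℕ} (a b : V) (iv jv : Fin m → V) (k l : Fin m) :
    trapMap a b iv jv ∘ (![TVert.a, TVert.vi k, TVert.vj l, TVert.b] : EPath (TVert m) 3)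
      = ![a, iv k, jv l, b] := by
  funext t; fin_cases t <;> rfl

theorem statement6 (K : Type*) [Field K] {V : Type*} (G : Dgraph V) (m : ℕ) (hm : 2 ≤ m)
    (a b : V) (iv jv : Fin m → V)
    (hai : ∀ k : Fin m, G.Adj a (iv k))
    (hij : ∀ k : Fin m, G.Adj (iv k) (jv k))
    (hjb : ∀ k : Fin m, G.Adj (jv k) b)
    (hij' : ∀ k : Fin m, G.Adj (iv (finRot k)) (jv k)) :
    (∑ k : Fin m, (Finsupp.single ![a, iv k, jv k, b] (1 : K)
        - Finsupp.single ![a, iv (finRot k), jv k, b] (1 : K))) ∈ Omega K V G 3 ∧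
    ∃ f : DgraphMap (Trap m) G,
      inducedMap K f.toFun 3 (tau K m)
        = ∑ k : Fin m, (Finsupp.single ![a, iv k, jv k, b] (1 : K)
            - Finsupp.single ![a, iv (finRot k), jv k, b] (1 : K)) := by
  have hA : (∑ k : Fin m, (Finsupp.single ![a, iv k, jv k, b] (1 : K)
        - Finsupp.single ![a, iv (finRot k), jv k, b] (1 : K))) ∈ allowedMod K V G 3 :=
    Submodule.sum_mem _ fun k _ => sub_mem
      (single_allowed_mem G (allowed3 G (hai k) (hij k) (hjb k)))
      (single_allowed_mem G (allowed3 G (hai (finRot k)) (hij' k) (hjb k)))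
  have hB : bdry K V 2 (∑ k : Fin m, (Finsupp.single ![a, iv k, jv k, b] (1 : K)
        - Finsupp.single ![a, iv (finRot k), jv k, b] (1 : K))) ∈ allowedMod K V G 2 := by
    rw [map_sum]
    have key : ∀ k : Fin m, bdry K V 2 (Finsupp.single ![a, iv k, jv k, b] (1 : K)
          - Finsupp.single ![a, iv (finRot k), jv k, b] (1 : K)) =
        (Finsupp.single (![iv k, jv k, b] : EPath V 2) (1 : K)
          - Finsupp.single ![iv (finRot k), jv k, b] 1
          - Finsupp.single ![a, iv k, jv k] 1
          + Finsupp.single ![a, iv (finRot k), jv k] 1)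
        + (regProj K V 2 (Finsupp.single ![a, iv k, b] 1)
          - regProj K V 2 (Finsupp.single ![a, iv (finRot k), b] 1)) := by
      intro k
      rw [map_sub, bdry_single3 G (hai k) (hij k) (hjb k),
        bdry_single3 G (hai (finRot k)) (hij' k) (hjb k)]
      abel
    rw [Finset.sum_congr rfl (fun k _ => key k), Finset.sum_add_distrib]
    have hz : (∑ k : Fin m, (regProj K V 2 (Finsupp.single (![a, iv k, b] : EPath V 2) (1 : K))
        - regProj K V 2 (Finsupp.single ![a, iv (finRot k), b] 1))) = 0 := by
      rw [Finset.sum_sub_distrib,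
        Function.Bijective.sum_comp finRot_bij
          (fun k => regProj K V 2 (Finsupp.single (![a, iv k, b] : EPath V 2) (1 : K))),
        sub_self]
    rw [hz, add_zero]
    refine Submodule.sum_mem _ fun k _ => ?_
    exact add_mem (sub_mem (sub_mem
      (single_allowed_mem G (allowed2 G (hij k) (hjb k)))
      (single_allowed_mem G (allowed2 G (hij' k) (hjb k))))
      (single_allowed_mem G (allowed2 G (hai k) (hij k))))
      (single_allowed_mem G (allowed2 G (hai (finRot k)) (hij' k)))
  refine ⟨Submodule.mem_inf.mpr ⟨hA, Submodule.mem_comap.mpr hB⟩,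
    ⟨⟨trapMap a b iv jv, ?_⟩, ?_⟩⟩
  · intro u v h
    cases u with
    | a =>
      cases v with
      | a => exact (h : False).elim
      | b => exact (h : False).elim
      | vi k => exact Or.inl (hai k)
      | vj k => exact (h : False).elim
    | b =>
      cases v with
      | a => exact (h : False).elim
      | b => exact (h : False).elim
      | vi k => exact (h : False).elim
      | vj k => exact (h : False).elim
    | vi k =>
      cases v with
      | a => exact (h : False).elim
      | b => exact (h : False).elim
      | vi l => exact (h : False).elim
      | vj l =>
        have h' : k = l ∨ k = finRot l := h
        rcases h' with rfl | rfl
        · exact Or.inl (hij _)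
        · exact Or.inl (hij' _)
    | vj k =>
      cases v with
      | a => exact (h : False).elim
      | b => exact Or.inl (hjb k)
      | vi l => exact (h : False).elim
      | vj l => exact (h : False).elim
  · rw [tau, map_sum]
    refine Finset.sum_congr rfl fun k _ => ?_
    rw [map_sub, inducedMap_single, inducedMap_single, trapMap_comp, trapMap_comp,
      regProj_single_reg (allowed_regular G (allowed3 G (hai k) (hij k) (hjb k))),
      regProj_single_reg (allowed_regular G (allowed3 G (hai (finRot k)) (hij' k) (hjb k)))]
end
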